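/- For an odd prime power q ≡ 1 (mod 3), q ≥ 7, there exists a set of at least (q²−1)/2 permutations of a set of size q−1 whose pairwise Hamming distance is at least q−3; i.e., M(q−1, q−3) ≥ (q²−1)/2. -/

import Mathlib

noncomputable def hd {Ω : Type*} (π σ : Equiv.Perm Ω) : ℕ :=
  Set.ncard {x | π x ≠ σ x}

set_option linter.unusedSectionVars false

namespace Stmt9Aux

open Finset

/-- Choosing half of a finite set paired by a fixed-point-free involution. -/
theorem pairing_aux {α : Type*} [DecidableEq α] (ι : α → α) (hinv : ∀ x, ι (ι x) = x) :
    ∀ (n : ℕ) (s : Finset α), s.card ≤ n → (∀ x ∈ s, ι x ∈ s) → (∀ x ∈ s, ι x ≠ x) →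
      ∃ Q ⊆ s, 2 * Q.card = s.card ∧ ∀ x ∈ Q, ι x ∉ Q := by
  intro n
  induction n with
  | zero =>
    intro s hs _ _
    have : s = ∅ := Finset.card_eq_zero.mp (Nat.le_zero.mp hs)
    subst this
    exact ⟨∅, by simp⟩
  | succ n ih =>
    intro s hcard hcl hne
    rcases s.eq_empty_or_nonempty with rfl | ⟨x, hx⟩
    · exact ⟨∅, by simp⟩
    · have hιx : ι x ∈ s := hcl x hx
      have hιxne : ι x ≠ x := hne x hx
      have hmem : ι x ∈ s.erase x := Finset.mem_erase.mpr ⟨hιxne, hιx⟩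
      set s' := (s.erase x).erase (ι x) with hs'
      have hsub : s' ⊆ s := (Finset.erase_subset _ _).trans (Finset.erase_subset _ _)
      have hxs' : x ∉ s' := by simp [hs']
      have hιxs' : ι x ∉ s' := by simp [hs']
      have hc1 : (s.erase x).card = s.card - 1 := Finset.card_erase_of_mem hx
      have hc2 : s'.card = (s.erase x).card - 1 := Finset.card_erase_of_mem hmem
      have hs2 : 2 ≤ s.card := Finset.one_lt_card.mpr ⟨x, hx, ι x, hιx, fun h => hιxne h.symm⟩
      have hcl' : ∀ y ∈ s', ι y ∈ s' := by
        intro y hy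
        have hy' := hy
        rw [hs', Finset.mem_erase, Finset.mem_erase] at hy'
        obtain ⟨h1, h2, h3⟩ := hy'
        rw [hs', Finset.mem_erase, Finset.mem_erase]
        refine ⟨?_, ?_, hcl y h3⟩
        · intro h; exact h2 (by rw [← hinv y, h, hinv])
        · intro h; exact h1 (by rw [← hinv y, h])
      obtain ⟨Q', hQ's, hcardQ, hind⟩ :=
        ih s' (by omega) hcl' (fun y hy => hne y (hsub hy))
      have hxQ' : x ∉ Q' := fun h => hxs' (hQ's h)
      refine ⟨insert x Q', ?_, ?_, ?_⟩
      · intro z hz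
        rcases Finset.mem_insert.mp hz with rfl | hz
        · exact hx
        · exact hsub (hQ's hz)
      · rw [Finset.card_insert_of_notMem hxQ']
        omega
      · intro z hz
        rcases Finset.mem_insert.mp hz with rfl | hz
        · intro h
          rcases Finset.mem_insert.mp h with h' | h'
          · exact hιxne h'
          · exact hιxs' (hQ's h')
        · intro h
          rcases Finset.mem_insert.mp h with h' | h'
          · have hz' : z = ι x := by rw [← hinv z, h']
            exact hιxs' (hz' ▸ hQ's hz)
          · exact hind z hz h'

section Field

variable {K : Type*} [Field K] [Fintype K] [DecidableEq K]

def myF (a b : K) (x : K) : K := if x = 0 then 0 else if a * x + b = 0 then b else a * x + b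

def myG (a b : K) (y : K) : K := if y = 0 then 0 else if y = b then -(b / a) else (y - b) / a

theorem myF_left (a b : K) (ha : a ≠ 0) : Function.LeftInverse (myG a b) (myF a b) := by
  intro x
  by_cases hx : x = 0
  · simp [myF, myG, hx]
  · by_cases h2 : a * x + b = 0
    · have hb : b ≠ 0 := by
        intro hb0
        apply hx
        rw [hb0, add_zero, mul_eq_zero] at h2
        tauto
      have hF : myF a b x = b := by simp [myF, hx, h2]
      rw [hF, myG, if_neg hb, if_pos rfl]
      field_simp
      linear_combination -h2
    · have hF : myF a b x = a * x + b := by simp [myF, hx, h2]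
      have hyb : a * x + b ≠ b := by
        intro h
        apply hx
        have : a * x = 0 := by linear_combination h
        rcases mul_eq_zero.mp this with h' | h'
        · exact absurd h' ha
        · exact h'
      rw [hF, myG, if_neg h2, if_neg hyb]
      field_simp
      ring

theorem myF_right (a b : K) (ha : a ≠ 0) : Function.RightInverse (myG a b) (myF a b) := by
  intro y
  by_cases hy : y = 0
  · simp [myF, myG, hy]
  · by_cases h2 : y = b
    · have hG : myG a b y = -(b / a) := by rw [myG, if_neg hy, if_pos h2]
      have hx0 : -(b / a) ≠ 0 := by
        intro h
        rw [neg_eq_zero, div_eq_zero_iff] at h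
        rcases h with h | h
        · exact hy (h2.trans h)
        · exact ha h
      have hab : a * -(b / a) + b = 0 := by
        field_simp
        ring
      rw [hG, myF, if_neg hx0, if_pos hab, h2]
    · have hG : myG a b y = (y - b) / a := by rw [myG, if_neg hy, if_neg h2]
      have hx0 : (y - b) / a ≠ 0 := by
        intro h
        rw [div_eq_zero_iff, sub_eq_zero] at h
        rcases h with h | h
        · exact h2 h
        · exact ha h
      have hab : a * ((y - b) / a) + b = y := by field_simp; ring
      rw [hG, myF, if_neg hx0, hab, if_neg hy]

noncomputable def myE (a b : K) (ha : a ≠ 0) : Equiv.Perm K :=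
  ⟨myF a b, myG a b, myF_left a b ha, myF_right a b ha⟩

theorem myF_zero_iff (a b : K) (ha : a ≠ 0) (x : K) : myF a b x = 0 ↔ x = 0 := by
  constructor
  · intro h
    by_contra hx
    rw [myF, if_neg hx] at h
    by_cases h2 : a * x + b = 0
    · rw [if_pos h2] at h
      rw [h, add_zero, mul_eq_zero] at h2
      tauto
    · rw [if_neg h2] at h
      exact h2 h
  · intro h; simp [myF, h]

noncomputable def myP (a b : K) (ha : a ≠ 0) : Equiv.Perm {x : K // x ≠ 0} :=
  (myE a b ha).subtypePerm (by
    intro x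
    exact not_congr (myF_zero_iff a b ha x))

theorem myP_apply (a b : K) (ha : a ≠ 0) (x : {x : K // x ≠ 0}) :
    (myP a b ha x : K) = myF a b (x : K) := rfl

theorem cases_of_agree {a b c d x : K} (hx : x ≠ 0) (h : myF a b x = myF c d x) :
    (a * x + b = c * x + d) ∨ (a * x + b = 0 ∧ b = c * x + d) ∨
      (c * x + d = 0 ∧ a * x + b = d) := by
  rw [myF, myF, if_neg hx, if_neg hx] at h
  by_cases h1 : a * x + b = 0 <;> by_cases h2 : c * x + d = 0
  · exact Or.inl (h1.trans h2.symm)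
  · rw [if_pos h1, if_neg h2] at h; exact Or.inr (Or.inl ⟨h1, h⟩)
  · rw [if_neg h1, if_pos h2] at h; exact Or.inr (Or.inr ⟨h2, h⟩)
  · rw [if_neg h1, if_neg h2] at h; exact Or.inl h

theorem uniq1 {a b c d x y : K} (h1 : a * x + b = c * x + d) (h2 : a * y + b = c * y + d)
    (hxy : x ≠ y) : a = c ∧ b = d := by
  have h3 : (a - c) * (x - y) = 0 := by linear_combination h1 - h2
  rcases mul_eq_zero.mp h3 with h' | h'
  · have hac : a = c := by linear_combination h'
    refine ⟨hac, ?_⟩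
    linear_combination h1 - x * hac
  · exact absurd (by linear_combination h') hxy

theorem uniq2 {a b x y : K} (ha : a ≠ 0) (h1 : a * x + b = 0) (h2 : a * y + b = 0) :
    x = y :=
  mul_left_cancel₀ ha (by linear_combination h1 - h2)

theorem main23 {a b c d u v : K} (ha : a ≠ 0) (hc : c ≠ 0) (hu : u ≠ 0) (hv : v ≠ 0)
    (h21 : a * u + b = 0) (h22 : b = c * u + d)
    (h31 : c * v + d = 0) (h32 : a * v + b = d) :
    b ≠ 0 ∧ d ≠ 0 ∧ c * d = -(a * b) := by
  have hb : b ≠ 0 := by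
    intro hb0
    rw [hb0, add_zero, mul_eq_zero] at h21
    tauto
  have hd0 : d ≠ 0 := by
    intro hd0
    rw [hd0, add_zero, mul_eq_zero] at h31
    tauto
  have E1 : a * d = b * (a + c) := by linear_combination (-a) * h22 - c * h21
  have E2 : b * c = d * (a + c) := by linear_combination c * h32 - a * h31
  have hbd : b * d ≠ 0 := mul_ne_zero hb hd0
  have h4 : a * c = (a + c) ^ 2 := by
    apply mul_left_cancel₀ hbd
    linear_combination (b * c) * E1 + (b * (a + c)) * E2
  have h5 : a ^ 2 + a * c + c ^ 2 = 0 := by linear_combination -h4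
  refine ⟨hb, hd0, ?_⟩
  apply mul_left_cancel₀ ha
  linear_combination c * E1 + b * h5

theorem no_three {a b c d x y z : K} (ha : a ≠ 0) (hc : c ≠ 0)
    (hx : x ≠ 0) (hy : y ≠ 0) (hz : z ≠ 0)
    (hxy : x ≠ y) (hxz : x ≠ z) (hyz : y ≠ z)
    (ex : myF a b x = myF c d x) (ey : myF a b y = myF c d y) (ez : myF a b z = myF c d z)
    (hne : (a, b) ≠ (c, d)) :
    b ≠ 0 ∧ d ≠ 0 ∧ c * d = -(a * b) := by
  have cx := cases_of_agree hx ex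
  have cy := cases_of_agree hy ey
  have cz := cases_of_agree hz ez
  rcases cx with c1x | ⟨c2x1, c2x2⟩ | ⟨c3x1, c3x2⟩ <;>
    rcases cy with c1y | ⟨c2y1, c2y2⟩ | ⟨c3y1, c3y2⟩ <;>
    rcases cz with c1z | ⟨c2z1, c2z2⟩ | ⟨c3z1, c3z2⟩
  all_goals first
    | (exact absurd (Prod.ext (uniq1 c1x c1y hxy).1 (uniq1 c1x c1y hxy).2) hne)
    | (exact absurd (Prod.ext (uniq1 c1x c1z hxz).1 (uniq1 c1x c1z hxz).2) hne)
    | (exact absurd (Prod.ext (uniq1 c1y c1z hyz).1 (uniq1 c1y c1z hyz).2) hne)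
    | (exact absurd (uniq2 ha c2x1 c2y1) hxy)
    | (exact absurd (uniq2 ha c2x1 c2z1) hxz)
    | (exact absurd (uniq2 ha c2y1 c2z1) hyz)
    | (exact absurd (uniq2 hc c3x1 c3y1) hxy)
    | (exact absurd (uniq2 hc c3x1 c3z1) hxz)
    | (exact absurd (uniq2 hc c3y1 c3z1) hyz)
    | (exact main23 ha hc hx hy c2x1 c2x2 c3y1 c3y2)
    | (exact main23 ha hc hx hz c2x1 c2x2 c3z1 c3z2)
    | (exact main23 ha hc hy hx c2y1 c2y2 c3x1 c3x2)
    | (exact main23 ha hc hy hz c2y1 c2y2 c3z1 c3z2)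
    | (exact main23 ha hc hz hx c2z1 c2z2 c3x1 c3x2)
    | (exact main23 ha hc hz hy c2z1 c2z2 c3y1 c3y2)

theorem agree_ncard_le (Q : Finset K) (hQ : ∀ x ∈ Q, -x ∉ Q) (h0 : (0 : K) ∉ Q)
    {a b c d : K} (ha : a ≠ 0) (hc : c ≠ 0)
    (hb : b = 0 ∨ a * b ∈ Q) (hd' : d = 0 ∨ c * d ∈ Q) (hne : (a, b) ≠ (c, d)) :
    {x : {x : K // x ≠ 0} | myP a b ha x = myP c d hc x}.ncard ≤ 2 := by
  by_contra hcon
  push_neg at hcon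
  rw [Set.two_lt_ncard (Set.toFinite _)] at hcon
  obtain ⟨x, hxm, y, hym, z, hzm, hxy, hxz, hyz⟩ := hcon
  have hfx : myF a b (x : K) = myF c d (x : K) := by
    rw [← myP_apply a b ha, ← myP_apply c d hc, hxm]
  have hfy : myF a b (y : K) = myF c d (y : K) := by
    rw [← myP_apply a b ha, ← myP_apply c d hc, hym]
  have hfz : myF a b (z : K) = myF c d (z : K) := by
    rw [← myP_apply a b ha, ← myP_apply c d hc, hzm]
  obtain ⟨hb0, hd0, hcd⟩ := no_three ha hc x.2 y.2 z.2
    (fun h => hxy (Subtype.ext h)) (fun h => hxz (Subtype.ext h))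
    (fun h => hyz (Subtype.ext h)) hfx hfy hfz hne
  have hab : a * b ∈ Q := hb.resolve_left hb0
  have hcd' : c * d ∈ Q := hd'.resolve_left hd0
  rw [hcd] at hcd'
  exact hQ (a * b) hab hcd'

noncomputable def Phi {m : ℕ} (e : {x : K // x ≠ 0} ≃ Fin m) (pr : K × K) :
    Equiv.Perm (Fin m) :=
  if h : pr.1 = 0 then 1 else e.permCongr (myP pr.1 pr.2 h)

theorem Phi_eq {m : ℕ} (e : {x : K // x ≠ 0} ≃ Fin m) (pr : K × K) (h : pr.1 ≠ 0) :
    Phi e pr = e.permCongr (myP pr.1 pr.2 h) := dif_neg h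

theorem hd_core {m : ℕ} (e : {x : K // x ≠ 0} ≃ Fin m) {a b c d : K}
    (ha : a ≠ 0) (hc : c ≠ 0) :
    {i : Fin m | Phi e (a, b) i ≠ Phi e (c, d) i}.ncard
      = {x : {x : K // x ≠ 0} | myP a b ha x ≠ myP c d hc x}.ncard := by
  rw [Phi_eq e (a, b) ha, Phi_eq e (c, d) hc]
  have himg : {i : Fin m | e.permCongr (myP a b ha) i ≠ e.permCongr (myP c d hc) i}
      = e '' {x | myP a b ha x ≠ myP c d hc x} := by
    rw [Equiv.image_eq_preimage_symm]
    ext i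
    simp only [Set.mem_preimage, Set.mem_setOf_eq, Equiv.permCongr_apply]
    exact not_congr (Equiv.apply_eq_iff_eq e)
  rw [himg, Set.ncard_image_of_injective _ e.injective]

theorem diff_ncard_ge (Q : Finset K) (hQ : ∀ x ∈ Q, -x ∉ Q) (h0 : (0 : K) ∉ Q)
    {a b c d : K} (ha : a ≠ 0) (hc : c ≠ 0)
    (hb : b = 0 ∨ a * b ∈ Q) (hd' : d = 0 ∨ c * d ∈ Q) (hne : (a, b) ≠ (c, d)) :
    Nat.card {x : K // x ≠ 0} - 2
      ≤ {x : {x : K // x ≠ 0} | myP a b ha x ≠ myP c d hc x}.ncard := by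
  have hA := agree_ncard_le Q hQ h0 ha hc hb hd' hne
  have hcompl : {x : {x : K // x ≠ 0} | myP a b ha x ≠ myP c d hc x}
      = {x : {x : K // x ≠ 0} | myP a b ha x = myP c d hc x}ᶜ := by
    ext x; simp
  have hsum := Set.ncard_add_ncard_compl {x : {x : K // x ≠ 0} | myP a b ha x = myP c d hc x}
  rw [hcompl]
  omega

theorem main_generic (K : Type*) [Field K] [Fintype K] [DecidableEq K] (q : ℕ)
    (hcardK : Fintype.card K = q) (hq7 : 7 ≤ q) (h2K : (2 : K) ≠ 0) :
    ∃ A : Finset (Equiv.Perm (Fin (q - 1))),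
      (∀ π ∈ A, ∀ σ ∈ A, π ≠ σ → q - 3 ≤ hd π σ) ∧ (q ^ 2 - 1) / 2 ≤ A.card := by
  classical
  -- the nonzero elements
  set sK : Finset K := Finset.univ.filter (fun x : K => x ≠ 0) with hsK
  have hsKcard : sK.card = q - 1 := by
    rw [hsK, Finset.filter_ne', Finset.card_erase_of_mem (Finset.mem_univ 0),
      Finset.card_univ, hcardK]
  have hsKmem : ∀ x : K, x ∈ sK ↔ x ≠ 0 := by
    intro x; simp [hsK]
  have hΩcard : Fintype.card {x : K // x ≠ 0} = q - 1 := by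
    rw [Fintype.card_subtype]
    exact hsKcard
  have hΩnat : Nat.card {x : K // x ≠ 0} = q - 1 := by
    rw [Nat.card_eq_fintype_card]; exact hΩcard
  obtain ⟨e⟩ : Nonempty ({x : K // x ≠ 0} ≃ Fin (q - 1)) :=
    ⟨Fintype.equivFinOfCardEq hΩcard⟩
  -- the half-set Q
  obtain ⟨Q, hQsub, hQcard, hQind⟩ := pairing_aux (fun x : K => -x) (fun x => neg_neg x)
    sK.card sK le_rfl
    (fun x hx => (hsKmem _).2 (neg_ne_zero.mpr ((hsKmem _).1 hx)))
    (by
      intro x hx h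
      have h2x : (2 : K) * x = 0 := by linear_combination -h
      rcases mul_eq_zero.mp h2x with h' | h'
      · exact h2K h'
      · exact (hsKmem _).1 hx h')
  have h0Q : (0 : K) ∉ Q := fun h => ((hsKmem _).1 (hQsub h)) rfl
  -- the index set S
  set S : Finset (K × K) :=
    (sK ×ˢ ({(0 : K)} : Finset K)) ∪ (sK ×ˢ Q).image (fun pr => (pr.1, pr.2 * pr.1⁻¹))
    with hSdef
  have hmemS : ∀ pr ∈ S, pr.1 ≠ 0 ∧ (pr.2 = 0 ∨ pr.1 * pr.2 ∈ Q) := by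
    rintro ⟨u, v⟩ hpr
    rcases Finset.mem_union.mp hpr with h | h
    · obtain ⟨h1, h2⟩ := Finset.mem_product.mp h
      exact ⟨(hsKmem _).1 h1, Or.inl (Finset.mem_singleton.mp h2)⟩
    · obtain ⟨⟨a, y⟩, hmem, heq⟩ := Finset.mem_image.mp h
      obtain ⟨h1, h2⟩ := Finset.mem_product.mp hmem
      have ha : a ≠ 0 := (hsKmem _).1 h1
      rw [Prod.mk.injEq] at heq
      obtain ⟨rfl, rfl⟩ := heq
      refine ⟨ha, Or.inr ?_⟩
      have : a * (y * a⁻¹) = y := by field_simp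
      rw [this]
      exact h2
  -- disjointness and cardinality of S
  have hdis : Disjoint (sK ×ˢ ({(0 : K)} : Finset K))
      ((sK ×ˢ Q).image (fun pr => (pr.1, pr.2 * pr.1⁻¹))) := by
    rw [Finset.disjoint_left]
    rintro ⟨u, v⟩ h1 h2
    obtain ⟨hu, hv⟩ := Finset.mem_product.mp h1
    have hv0 : v = 0 := Finset.mem_singleton.mp hv
    obtain ⟨⟨a, y⟩, hmem, heq⟩ := Finset.mem_image.mp h2
    obtain ⟨ha', hy⟩ := Finset.mem_product.mp hmem
    rw [Prod.mk.injEq] at heq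
    obtain ⟨rfl, heq2⟩ := heq
    have ha : a ≠ 0 := (hsKmem _).1 ha'
    have hy0 : y ≠ 0 := fun h => h0Q (h ▸ hy)
    rw [hv0] at heq2
    rcases mul_eq_zero.mp heq2 with h' | h'
    · exact hy0 h'
    · exact (inv_ne_zero ha) h'
  have hinjpr : Set.InjOn (fun pr : K × K => (pr.1, pr.2 * pr.1⁻¹)) ↑(sK ×ˢ Q) := by
    rintro ⟨a, y⟩ h1 ⟨a', y'⟩ h2 he
    simp only [Prod.mk.injEq] at he
    obtain ⟨rfl, he2⟩ := he
    have ha : a ≠ 0 := (hsKmem _).1 (Finset.mem_product.mp (Finset.mem_coe.mp h1)).1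
    have : y = y' := mul_right_cancel₀ (inv_ne_zero ha) he2
    rw [this]
  have hScard : S.card = (q - 1) + (q - 1) * Q.card := by
    rw [hSdef, Finset.card_union_of_disjoint hdis, Finset.card_image_of_injOn hinjpr,
      Finset.card_product, Finset.card_product, Finset.card_singleton, hsKcard, mul_one]
  -- injectivity of Phi on S
  have hinjA : Set.InjOn (Phi e) ↑S := by
    rintro p1 hp1 p2 hp2 hP
    by_contra hne
    obtain ⟨ha1, hb1⟩ := hmemS p1 (Finset.mem_coe.mp hp1)
    obtain ⟨ha2, hb2⟩ := hmemS p2 (Finset.mem_coe.mp hp2)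
    have hne' : (p1.1, p1.2) ≠ (p2.1, p2.2) := fun h => hne h
    have hag := agree_ncard_le Q hQind h0Q ha1 ha2 hb1 hb2 hne'
    rw [Phi_eq e p1 ha1, Phi_eq e p2 ha2] at hP
    have hPP := (Equiv.permCongr e).injective hP
    have huniv : {x : {x : K // x ≠ 0} | myP p1.1 p1.2 ha1 x = myP p2.1 p2.2 ha2 x}
        = Set.univ := by
      ext x; simp [hPP]
    rw [huniv, Set.ncard_univ, hΩnat] at hag
    omega
  refine ⟨S.image (Phi e), ?_, ?_⟩
  · rintro π hπ σ hσ hps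
    obtain ⟨p1, hp1, rfl⟩ := Finset.mem_image.mp hπ
    obtain ⟨p2, hp2, rfl⟩ := Finset.mem_image.mp hσ
    obtain ⟨ha1, hb1⟩ := hmemS p1 hp1
    obtain ⟨ha2, hb2⟩ := hmemS p2 hp2
    have hne' : (p1.1, p1.2) ≠ (p2.1, p2.2) := fun h => hps (congrArg (Phi e) h)
    have hkey := diff_ncard_ge Q hQind h0Q ha1 ha2 hb1 hb2 hne'
    have heq : hd (Phi e p1) (Phi e p2)
        = {x : {x : K // x ≠ 0} | myP p1.1 p1.2 ha1 x ≠ myP p2.1 p2.2 ha2 x}.ncard :=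
      hd_core e ha1 ha2
    rw [heq]
    rw [hΩnat] at hkey
    omega
  · rw [Finset.card_image_of_injOn hinjA, hScard]
    have h2t : 2 * Q.card = q - 1 := hQcard.trans hsKcard
    have hrhs : (q - 1) + (q - 1) * Q.card = 2 * Q.card + 2 * (Q.card * Q.card) := by
      rw [← h2t]; ring
    rw [hrhs]
    have hq1 : q = 2 * Q.card + 1 := by omega
    have hsq : q ^ 2 = 4 * (Q.card * Q.card) + 4 * Q.card + 1 := by rw [hq1]; ring
    omega

end Field

end Stmt9Aux

theorem stmt9 (q : ℕ) (hq : IsPrimePow q) (hodd : Odd q) (hq3 : q % 3 = 1)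
    (hq7 : 7 ≤ q) :
    ∃ A : Finset (Equiv.Perm (Fin (q - 1))),
      (∀ π ∈ A, ∀ σ ∈ A, π ≠ σ → q - 3 ≤ hd π σ) ∧ (q ^ 2 - 1) / 2 ≤ A.card := by
  obtain ⟨p, k, hp, hk, hpk⟩ := hq
  haveI := Fact.mk hp.nat_prime
  letI : Fintype (GaloisField p k) := Fintype.ofFinite _
  letI : DecidableEq (GaloisField p k) := Classical.decEq _
  have hcardK : Fintype.card (GaloisField p k) = q := by
    rw [← Nat.card_eq_fintype_card, GaloisField.card p k hk.ne', hpk]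
  have hpodd : p ≠ 2 := by
    intro h
    rw [h] at hpk
    rcases hodd with ⟨m, hm⟩
    have : (2 : ℕ) ∣ q := hpk ▸ dvd_pow_self 2 hk.ne'
    omega
  have h2K : (2 : GaloisField p k) ≠ 0 := by
    intro h
    have hpd := (CharP.cast_eq_zero_iff (GaloisField p k) p 2).mp (by exact_mod_cast h)
    have h1 := hp.nat_prime.two_le
    have h2 := Nat.le_of_dvd (by norm_num) hpd
    omega
  exact Stmt9Aux.main_generic (GaloisField p k) q hcardK hq7 h2K
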